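/- Let d ≥ 1 and let K ⊂ ℝ^d be a compact set (not necessarily convex) such that there exist a, b ∈ ℝ^d with a ≠ 0 and { b + t a : t ∈ [0,1] } ⊂ K (in particular, this holds whenever K is compact with nonempty interior). Let σ : ℝ → ℝ be continuous and piecewise polynomial with finitely many pieces. Let (r_k)_{k≥1} and (n_k)_{k≥1} be arbitrary sequences of natural numbers and let (ε_k)_{k≥1} be a sequence of real numbers with ε_k → 0. Then there exists a continuous function f : K → ℝ such that for every k ≥ 1, inf_{g ∈ τ_{r_k, n_k}^{σ,d}} sup_{x ∈ K} |f(x) − g(x)| ≥ ε_k. -/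

import Mathlib

open MeasureTheory

/-- `Hidden σ d n s` is the set of tuples of hidden-unit functions `h^{(s+1)} = (h_1, …, h_n)` of
the `(s+1)`-st hidden layer of a feedforward network with input dimension `d`, `n` units in each
hidden layer and activation `σ`:  `h^{(1)}_i(x) = σ(w^i · x + b_i)` and
`h^{(ℓ+1)}_i(x) = σ(∑_j a_{ij} h^{(ℓ)}_j(x) + β_i)`. -/
def Hidden (σ : ℝ → ℝ) (d n : ℕ) : ℕ → Set ((Fin d → ℝ) → Fin n → ℝ)
  | 0 => { h | ∃ (w : Fin n → Fin d → ℝ) (b : Fin n → ℝ),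
      h = fun x i => σ ((∑ j, w i j * x j) + b i) }
  | s + 1 => { h | ∃ g ∈ Hidden σ d n s, ∃ (a : Fin n → Fin n → ℝ) (β : Fin n → ℝ),
      h = fun x i => σ ((∑ j, a i j * g x j) + β i) }

/-- `Tau σ r n d` is the set `τ_{r,n}^{σ,d}` of functions `ℝ^d → ℝ` computed by a feedforward
neural network with activation `σ`, at most `r` hidden layers and `n` units in each hidden
layer: `x ↦ ∑_i c_i h^{(s)}_i(x)` for some `1 ≤ s ≤ r`. -/
def Tau (σ : ℝ → ℝ) (r n d : ℕ) : Set ((Fin d → ℝ) → ℝ) :=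
  { f | ∃ s : ℕ, s < r ∧ ∃ h ∈ Hidden σ d n s, ∃ c : Fin n → ℝ,
      f = fun x => ∑ i, c i * h x i }

/-- `σ : ℝ → ℝ` is piecewise polynomial with finitely many pieces: there are breakpoints
`t 0 < t 1 < … < t (m-1)` and polynomials `p 0, …, p m` such that `σ` agrees with `p j` on the
`j`-th open piece (i.e. on `{x | t i < x for i < j, and x < t i for j ≤ i}`). -/
def IsPiecewisePoly (σ : ℝ → ℝ) : Prop :=
  ∃ (m : ℕ) (t : Fin m → ℝ), StrictMono t ∧
    ∃ p : Fin (m + 1) → Polynomial ℝ,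
      ∀ j : Fin (m + 1), ∀ x : ℝ,
        (∀ i : Fin m, ((i : ℕ) < (j : ℕ) → t i < x) ∧ ((j : ℕ) ≤ (i : ℕ) → x < t i)) →
        σ x = (p j).eval x


section AuxPW
open Polynomial

/-- piecewise polynomial of degree ≤ D off the finite breakpoint set B -/
def PW (D : ℕ) (B : Finset ℝ) (φ : ℝ → ℝ) : Prop :=
  ∀ u v : ℝ, u < v → (∀ x ∈ Set.Ioo u v, x ∉ B) →
    ∃ q : ℝ[X], q.natDegree ≤ D ∧ ∀ x ∈ Set.Ioo u v, φ x = q.eval x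

lemma poly_eq_on (p q : ℝ[X]) (a b : ℝ) (h : a < b)
    (hp : ∀ x ∈ Set.Ioo a b, p.eval x = q.eval x) : p = q :=
  Polynomial.eq_of_infinite_eval_eq _ _ (((Set.Ioo_infinite h)).mono (fun x hx => hp x hx))

lemma PW.mono {D D' : ℕ} {B B' : Finset ℝ} {φ : ℝ → ℝ} (h : PW D B φ)
    (hB : B ⊆ B') (hD : D ≤ D') : PW D' B' φ := by
  intro u v huv hB'
  obtain ⟨q, hq, he⟩ := h u v huv (fun x hx hxB => hB' x hx (hB hxB))
  exact ⟨q, hq.trans hD, he⟩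

lemma PW.const (D : ℕ) (B : Finset ℝ) (c : ℝ) : PW D B (fun _ => c) := by
  intro u v huv _
  exact ⟨C c, by simp, by simp⟩

lemma PW.add {D : ℕ} {B B' : Finset ℝ} {φ ψ : ℝ → ℝ} (h : PW D B φ) (h' : PW D B' ψ) :
    PW D (B ∪ B') (fun x => φ x + ψ x) := by
  intro u v huv hB
  obtain ⟨q, hq, he⟩ := h u v huv (fun x hx hxB => hB x hx (Finset.mem_union_left _ hxB))
  obtain ⟨q', hq', he'⟩ := h' u v huv (fun x hx hxB => hB x hx (Finset.mem_union_right _ hxB))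
  refine ⟨q + q', (natDegree_add_le q q').trans (by omega), fun x hx => ?_⟩
  simp [he x hx, he' x hx]

lemma PW.smul {D : ℕ} {B : Finset ℝ} {φ : ℝ → ℝ} (c : ℝ) (h : PW D B φ) :
    PW D B (fun x => c * φ x) := by
  intro u v huv hB
  obtain ⟨q, hq, he⟩ := h u v huv hB
  refine ⟨C c * q, (natDegree_C_mul_le c q).trans hq, fun x hx => by simp [he x hx]⟩

lemma PW.sum {ι : Type*} {D : ℕ} (s : Finset ι) (B : ι → Finset ℝ) (φ : ι → ℝ → ℝ)
    (h : ∀ i ∈ s, PW D (B i) (φ i)) :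
    PW D (s.biUnion B) (fun x => ∑ i ∈ s, φ i x) := by
  classical
  induction s using Finset.induction_on with
  | empty => simpa using PW.const D ∅ 0
  | insert a s hni ih =>
    have := (h a (Finset.mem_insert_self a s)).add
      (ih (fun i hi => h i (Finset.mem_insert_of_mem hi)))
    rw [Finset.biUnion_insert]
    refine PW.mono ?_ (le_refl _) (le_refl _)
    convert this using 2 with x
    rw [Finset.sum_insert hni]

lemma PW.glob {D : ℕ} {B : Finset ℝ} {φ : ℝ → ℝ} (h : PW D B φ) :
    ∃ Q : Option {x // x ∈ B} → ℝ[X], (∀ j, (Q j).natDegree ≤ D) ∧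
      ∀ u v : ℝ, u < v → (∀ x ∈ Set.Ioo u v, x ∉ B) →
        ∃ j, ∀ x ∈ Set.Ioo u v, φ x = (Q j).eval x := by
  classical
  set nxt : {x // x ∈ B} → ℝ := fun c =>
    if hc : ((B.filter (fun y => c.1 < y))).Nonempty then (B.filter (fun y => c.1 < y)).min' hc
    else c.1 + 1 with hnxt
  have hclt : ∀ c, c.1 < nxt c := by
    intro c
    by_cases hc : ((B.filter (fun y => c.1 < y))).Nonempty
    · simp only [hnxt, dif_pos hc]
      exact (Finset.mem_filter.1 (Finset.min'_mem _ hc)).2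
    · simp only [hnxt, dif_neg hc]; linarith
  have hcnone : ∀ c, ∀ x ∈ Set.Ioo c.1 (nxt c), x ∉ B := by
    intro c x hx hxB
    have h1 : x ∈ B.filter (fun y => c.1 < y) := Finset.mem_filter.2 ⟨hxB, hx.1⟩
    have hc : ((B.filter (fun y => c.1 < y))).Nonempty := ⟨x, h1⟩
    have := Finset.min'_le _ x h1
    rw [hnxt] at hx
    simp only [dif_pos hc] at hx
    exact absurd hx.2 (not_lt.2 this)
  set lo0 : ℝ := if hB : B.Nonempty then B.min' hB - 1 else 0 with hlo0
  set hi0 : ℝ := if hB : B.Nonempty then B.min' hB else 1 with hhi0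
  have hlt0 : lo0 < hi0 := by
    by_cases hB : B.Nonempty
    · simp only [hlo0, hhi0, dif_pos hB]; linarith
    · simp only [hlo0, hhi0, dif_neg hB]; linarith
  have hnone0 : ∀ x ∈ Set.Ioo lo0 hi0, x ∉ B := by
    intro x hx hxB
    have hB : B.Nonempty := ⟨x, hxB⟩
    have := B.min'_le x hxB
    rw [hhi0] at hx
    simp only [dif_pos hB] at hx
    exact absurd hx.2 (not_lt.2 this)
  refine ⟨fun j => Option.rec (Classical.choose (h lo0 hi0 hlt0 hnone0))
      (fun c => Classical.choose (h c.1 (nxt c) (hclt c) (hcnone c))) j, fun j => ?_, ?_⟩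
  · cases j with
    | none => exact (Classical.choose_spec (h lo0 hi0 hlt0 hnone0)).1
    | some c => exact (Classical.choose_spec (h c.1 (nxt c) (hclt c) (hcnone c))).1
  intro u v huv hB
  by_cases hne : (B.filter (fun y => y ≤ u)).Nonempty
  · set c' : ℝ := (B.filter (fun y => y ≤ u)).max' hne with hc'
    have hc'B : c' ∈ B := (Finset.mem_filter.1 (Finset.max'_mem _ hne)).1
    have hc'u : c' ≤ u := (Finset.mem_filter.1 (Finset.max'_mem _ hne)).2
    set c : {x // x ∈ B} := ⟨c', hc'B⟩ with hcdef
    have spec := Classical.choose_spec (h c.1 (nxt c) (hclt c) (hcnone c))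
    refine ⟨some c, fun x hx => ?_⟩
    by_cases hcc : ((B.filter (fun y => c' < y))).Nonempty
    · -- bounded component (c', min')
      have hnn : nxt c = (B.filter (fun y => c' < y)).min' hcc := by
        rw [hnxt]; simp only [hcdef, dif_pos hcc]
      have hvn : v ≤ nxt c := by
        by_contra hvn
        push_neg at hvn
        have h2 : nxt c ∈ B := by
          rw [hnn]; exact (Finset.mem_filter.1 (Finset.min'_mem _ hcc)).1
        have h3 : u < nxt c := by
          by_contra h3
          push_neg at h3
          have hm : nxt c ∈ B.filter (fun y => y ≤ u) := Finset.mem_filter.2 ⟨h2, h3⟩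
          have := Finset.le_max' _ _ hm
          rw [← hc'] at this
          exact absurd (hclt c) (not_lt.2 this)
        exact hB (nxt c) ⟨h3, hvn⟩ h2
      exact spec.2 x ⟨lt_of_le_of_lt hc'u hx.1, lt_of_lt_of_le hx.2 hvn⟩
    · -- unbounded component (c', ∞): bridge
      have hlt2 : c' < max v (c' + 1) := lt_of_lt_of_le (by linarith : c' < c' + 1) (le_max_right _ _)
      have hnone2 : ∀ y ∈ Set.Ioo c' (max v (c' + 1)), y ∉ B := by
        intro y hy hyB
        exact hcc ⟨y, Finset.mem_filter.2 ⟨hyB, hy.1⟩⟩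
      obtain ⟨q', hq', he'⟩ := h c' (max v (c' + 1)) hlt2 hnone2
      have hQq : Classical.choose (h c.1 (nxt c) (hclt c) (hcnone c)) = q' := by
        apply poly_eq_on _ _ c.1 (nxt c) (hclt c)
        intro y hy
        have hsub : y ∈ Set.Ioo c' (max v (c' + 1)) := by
          constructor
          · exact hy.1
          · have : nxt c = c' + 1 := by rw [hnxt]; simp only [hcdef, dif_neg hcc]
            calc y < nxt c := hy.2
            _ = c' + 1 := this
            _ ≤ max v (c' + 1) := le_max_right _ _
        rw [← spec.2 y hy, he' y hsub]
      show φ x = eval x (Classical.choose (h c.1 (nxt c) (hclt c) (hcnone c)))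
      rw [hQq]
      refine he' x ⟨lt_of_le_of_lt hc'u hx.1, lt_of_lt_of_le hx.2 (le_max_left _ _)⟩
  · -- leftmost component
    have spec := Classical.choose_spec (h lo0 hi0 hlt0 hnone0)
    refine ⟨none, fun x hx => ?_⟩
    have hall : ∀ y ∈ B, u < y := by
      intro y hy
      by_contra hyu
      push_neg at hyu
      exact hne ⟨y, Finset.mem_filter.2 ⟨hy, hyu⟩⟩
    set lo' : ℝ := min u lo0 with hlo'
    set hi' : ℝ := max v hi0 with hhi'
    have hlt2 : lo' < hi' := lt_of_le_of_lt (min_le_left _ _) (lt_of_lt_of_le huv (le_max_left _ _))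
    have hnone2 : ∀ y ∈ Set.Ioo lo' hi', y ∉ B := by
      intro y hy hyB
      have hB' : B.Nonempty := ⟨y, hyB⟩
      have h1 := B.min'_le y hyB
      have h2 : hi0 = B.min' hB' := by rw [hhi0]; simp only [dif_pos hB']
      have h3 : u < y := hall y hyB
      have h4 : y < v := by
        rcases lt_or_ge y v with h | h
        · exact h
        · exfalso
          have : y < hi' := hy.2
          rw [hhi'] at this
          rcases max_cases v hi0 with ⟨he, _⟩ | ⟨he, _⟩
          · rw [he] at this; linarith
          · rw [he] at this; rw [h2] at this; linarith
      exact hB y ⟨h3, h4⟩ hyB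
    obtain ⟨q', hq', he'⟩ := h lo' hi' hlt2 hnone2
    have hQq : Classical.choose (h lo0 hi0 hlt0 hnone0) = q' := by
      apply poly_eq_on _ _ lo0 hi0 hlt0
      intro y hy
      rw [← spec.2 y hy]
      exact he' y ⟨lt_of_le_of_lt (min_le_right _ _) hy.1, lt_of_lt_of_le hy.2 (le_max_right _ _)⟩
    show φ x = eval x (Classical.choose (h lo0 hi0 hlt0 hnone0))
    rw [hQq]
    exact he' x ⟨lt_of_le_of_lt (min_le_left _ _) hx.1, lt_of_lt_of_le hx.2 (le_max_left _ _)⟩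

lemma PW.comp {σ : ℝ → ℝ} {m : ℕ} {t : Fin m → ℝ} (ht : StrictMono t)
    {p : Fin (m + 1) → ℝ[X]}
    (hp : ∀ j : Fin (m + 1), ∀ x : ℝ,
      (∀ i : Fin m, ((i : ℕ) < (j : ℕ) → t i < x) ∧ ((j : ℕ) ≤ (i : ℕ) → x < t i)) →
      σ x = (p j).eval x)
    {e : ℕ} (he : ∀ j, (p j).natDegree ≤ e)
    {D : ℕ} {B : Finset ℝ} {φ : ℝ → ℝ} (h : PW D B φ) :
    ∃ B' : Finset ℝ, B'.card ≤ B.card + (B.card + 1) * (m * D) ∧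
      PW (e * D) B' (fun x => σ (φ x)) := by
  classical
  obtain ⟨Q, hQd, hQ⟩ := h.glob
  refine ⟨B ∪ Finset.univ.biUnion (fun j : Option {x // x ∈ B} =>
      Finset.univ.biUnion (fun i : Fin m => ((Q j) - C (t i)).roots.toFinset)), ?_, ?_⟩
  · refine (Finset.card_union_le _ _).trans (Nat.add_le_add_left ?_ _)
    refine (Finset.card_biUnion_le).trans ?_
    have hb : ∀ j : Option {x // x ∈ B},
        (Finset.univ.biUnion (fun i : Fin m => ((Q j) - C (t i)).roots.toFinset)).card ≤ m * D := by
      intro j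
      refine (Finset.card_biUnion_le).trans ?_
      have : ∀ i : Fin m, (((Q j) - C (t i)).roots.toFinset).card ≤ D := by
        intro i
        refine (Multiset.toFinset_card_le _).trans ((card_roots' _).trans ?_)
        refine (natDegree_sub_le _ _).trans ?_
        simp [hQd j]
      calc ∑ i : Fin m, (((Q j) - C (t i)).roots.toFinset).card ≤ ∑ _i : Fin m, D :=
            Finset.sum_le_sum (fun i _ => this i)
        _ = m * D := by simp [Finset.sum_const, mul_comm]
    calc ∑ j, (Finset.univ.biUnion (fun i : Fin m => ((Q j) - C (t i)).roots.toFinset)).card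
        ≤ ∑ _j : Option {x // x ∈ B}, m * D := Finset.sum_le_sum (fun j _ => hb j)
      _ = (B.card + 1) * (m * D) := by
          simp [Finset.sum_const, Finset.card_univ]
  · intro u v huv hBx
    have hBonly : ∀ x ∈ Set.Ioo u v, x ∉ B := fun x hx hxB =>
      hBx x hx (Finset.mem_union_left _ hxB)
    obtain ⟨j, hj⟩ := hQ u v huv hBonly
    by_cases hc : ∃ i : Fin m, Q j = C (t i)
    · obtain ⟨i, hi⟩ := hc
      refine ⟨C (σ (t i)), by simp, fun x hx => ?_⟩
      have : φ x = t i := by rw [hj x hx, hi, eval_C]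
      simp [this]
    · push_neg at hc
      have hnroot : ∀ i : Fin m, ∀ x ∈ Set.Ioo u v, (Q j).eval x ≠ t i := by
        intro i x hx hroot
        refine hBx x hx (Finset.mem_union_right _ ?_)
        refine Finset.mem_biUnion.2 ⟨j, Finset.mem_univ _, Finset.mem_biUnion.2
          ⟨i, Finset.mem_univ _, ?_⟩⟩
        rw [Multiset.mem_toFinset, mem_roots (sub_ne_zero.2 (hc i))]
        simp [IsRoot, hroot]
      set x0 : ℝ := (u + v) / 2 with hx0def
      have hx0 : x0 ∈ Set.Ioo u v := by constructor <;> simp [hx0def] <;> linarith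
      -- sign constancy
      have key : ∀ i : Fin m, ∀ x ∈ Set.Ioo u v, ∀ y ∈ Set.Ioo u v,
          (Q j).eval x < t i → t i < (Q j).eval y → False := by
        intro i x hx y hy h1 h2
        have hsub : Set.uIcc x y ⊆ Set.Ioo u v :=
          (Set.ordConnected_Ioo).uIcc_subset hx hy
        have hm : t i ∈ Set.uIcc ((Q j).eval x) ((Q j).eval y) :=
          Set.mem_uIcc.2 (Or.inl ⟨le_of_lt h1, le_of_lt h2⟩)
        obtain ⟨c, hcm, hce⟩ := intermediate_value_uIcc
          (Polynomial.continuous (Q j)).continuousOn hm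
        exact hnroot i c (hsub hcm) hce
      have key2 : ∀ i : Fin m, ∀ x ∈ Set.Ioo u v, ∀ y ∈ Set.Ioo u v,
          t i < (Q j).eval x → t i < (Q j).eval y := by
        intro i x hx y hy hlt
        rcases lt_trichotomy (t i) ((Q j).eval y) with h1 | h1 | h1
        · exact h1
        · exact absurd h1.symm (hnroot i y hy)
        · exact absurd (key i y hy x hx h1 hlt) (fun h => h)
      set J : Fin (m + 1) := ⟨(Finset.univ.filter (fun i : Fin m => t i < (Q j).eval x0)).card,
        Nat.lt_succ_of_le ((Finset.card_filter_le _ _).trans (by simp))⟩ with hJ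
      set S := Finset.univ.filter (fun i : Fin m => t i < (Q j).eval x0) with hS
      have hJcard : (J : ℕ) = S.card := rfl
      have hmemiff : ∀ i : Fin m, ((i : ℕ) < (J : ℕ) ↔ t i < (Q j).eval x0) := by
        intro i
        have hdc : ∀ i' i'' : Fin m, i' ≤ i'' → i'' ∈ S → i' ∈ S := by
          intro i' i'' hle hmem
          rw [hS, Finset.mem_filter] at hmem ⊢
          exact ⟨Finset.mem_univ _, lt_of_le_of_lt (ht.monotone hle) hmem.2⟩
        rw [hJcard]
        constructor
        · intro hlt
          by_contra hni
          have hnimem : i ∉ S := by rw [hS, Finset.mem_filter]; push_neg; exact fun _ => not_lt.1 hni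
          have hsub : S ⊆ Finset.Iio i := by
            intro k hk
            rw [Finset.mem_Iio]
            by_contra hki
            push_neg at hki
            exact hnimem (hdc i k hki hk)
          have h4 := Finset.card_le_card hsub
          simp at h4
          omega
        · intro hlt
          have himem : i ∈ S := by rw [hS, Finset.mem_filter]; exact ⟨Finset.mem_univ _, hlt⟩
          have hsub : Finset.Iic i ⊆ S := fun k hk => hdc k i (Finset.mem_Iic.1 hk) himem
          have h4 := Finset.card_le_card hsub
          simp at h4
          omega
      refine ⟨(p J).comp (Q j), ?_, fun x hx => ?_⟩
      · rw [natDegree_comp]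
        exact Nat.mul_le_mul (he J) (hQd j)
      · have hcond : ∀ i : Fin m, ((i : ℕ) < (J : ℕ) → t i < φ x) ∧
            ((J : ℕ) ≤ (i : ℕ) → φ x < t i) := by
          intro i
          rw [hj x hx]
          constructor
          · intro hlt
            exact key2 i x0 hx0 x hx ((hmemiff i).1 hlt)
          · intro hge
            have hn : ¬ t i < (Q j).eval x0 := fun hcon => by
              have := (hmemiff i).2 hcon; omega
            rcases lt_trichotomy ((Q j).eval x) (t i) with h2 | h2 | h2
            · exact h2
            · exact absurd h2 (hnroot i x hx)
            · exact absurd (key2 i x hx x0 hx0 h2) hn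
        rw [eval_comp, ← hj x hx]
        exact hp J (φ x) hcond

/-- breakpoint-count bound for layer `s+1` -/
def Cb (m e n : ℕ) : ℕ → ℕ
  | 0 => m
  | s + 1 => n * Cb m e n s + (n * Cb m e n s + 1) * (m * e ^ (s + 1))

lemma Cb_mono (m e n : ℕ) (hn : 1 ≤ n) : Monotone (Cb m e n) := by
  apply monotone_nat_of_le_succ
  intro s
  calc Cb m e n s = 1 * Cb m e n s := (one_mul _).symm
    _ ≤ n * Cb m e n s := Nat.mul_le_mul_right _ hn
    _ ≤ _ := Nat.le_add_right _ _

lemma affine_pw (c0 c1 : ℝ) : PW 1 ∅ (fun u => c0 + c1 * u) := by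
  intro u v huv _
  refine ⟨C c0 + C c1 * X, ?_, fun x hx => by simp⟩
  refine (natDegree_add_le _ _).trans (max_le (by simp) ?_)
  exact (natDegree_C_mul_le _ _).trans natDegree_X_le

lemma hidden_pw {σ : ℝ → ℝ} {m : ℕ} {t : Fin m → ℝ} (ht : StrictMono t)
    {p : Fin (m + 1) → ℝ[X]}
    (hp : ∀ j : Fin (m + 1), ∀ x : ℝ,
      (∀ i : Fin m, ((i : ℕ) < (j : ℕ) → t i < x) ∧ ((j : ℕ) ≤ (i : ℕ) → x < t i)) →
      σ x = (p j).eval x)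
    {e : ℕ} (he : ∀ j, (p j).natDegree ≤ e)
    {d n : ℕ} (a b : Fin d → ℝ) :
    ∀ s : ℕ, ∀ h ∈ Hidden σ d n s, ∀ i : Fin n,
      ∃ B : Finset ℝ, B.card ≤ Cb m e n s ∧
        PW (e ^ (s + 1)) B (fun u => h (fun j => b j + u * a j) i) := by
  intro s
  induction s with
  | zero =>
    rintro h ⟨w, b0, rfl⟩ i
    have hinner : PW 1 ∅ (fun u => (∑ j, w i j * (b j + u * a j)) + b0 i) := by
      have heq : ∀ u : ℝ, (∑ j, w i j * (b j + u * a j)) + b0 i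
          = ((∑ j, w i j * b j) + b0 i) + (∑ j, w i j * a j) * u := by
        intro u
        have h1 : ∀ j, w i j * (b j + u * a j) = w i j * b j + w i j * a j * u :=
          fun j => by ring
        rw [Finset.sum_congr rfl (fun j _ => h1 j), Finset.sum_add_distrib, ← Finset.sum_mul]
        ring
      have := affine_pw ((∑ j, w i j * b j) + b0 i) (∑ j, w i j * a j)
      intro u v huv hB
      obtain ⟨q, hq, heq2⟩ := this u v huv hB
      exact ⟨q, hq, fun x hx => (heq x).trans (heq2 x hx)⟩
    obtain ⟨B', hB', hpw⟩ := PW.comp ht hp he hinner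
    refine ⟨B', ?_, ?_⟩
    · simpa [Cb] using hB'
    · simpa using hpw
  | succ s ih =>
    rintro h ⟨g, hg, A, β, rfl⟩ i
    choose Bf hBcard hBpw using fun j => ih g hg j
    have hsum : PW (e ^ (s + 1)) (Finset.univ.biUnion Bf)
        (fun u => ∑ j, A i j * g (fun j' => b j' + u * a j') j) :=
      PW.sum Finset.univ Bf _ (fun j _ => PW.smul (A i j) (hBpw j))
    have hinner : PW (e ^ (s + 1)) (Finset.univ.biUnion Bf ∪ ∅)
        (fun u => (∑ j, A i j * g (fun j' => b j' + u * a j') j) + β i) :=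
      PW.add hsum (PW.const _ _ (β i))
    obtain ⟨B', hB', hpw⟩ := PW.comp ht hp he hinner
    refine ⟨B', ?_, ?_⟩
    · have hcard : (Finset.univ.biUnion Bf ∪ ∅).card ≤ n * Cb m e n s := by
        rw [Finset.union_empty]
        refine Finset.card_biUnion_le.trans ?_
        calc ∑ j : Fin n, (Bf j).card ≤ ∑ _j : Fin n, Cb m e n s :=
              Finset.sum_le_sum (fun j _ => hBcard j)
          _ = n * Cb m e n s := by simp [Finset.sum_const, Finset.card_univ]
      calc B'.card ≤ (Finset.univ.biUnion Bf ∪ ∅).card +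
            ((Finset.univ.biUnion Bf ∪ ∅).card + 1) * (m * e ^ (s + 1)) := hB'
        _ ≤ n * Cb m e n s + (n * Cb m e n s + 1) * (m * e ^ (s + 1)) := by
            have := hcard
            gcongr
        _ = Cb m e n (s + 1) := rfl
    · have : e * e ^ (s + 1) = e ^ (s + 1 + 1) := by ring
      exact PW.mono hpw (le_refl _) (le_of_eq this)

lemma hidden_cont {σ : ℝ → ℝ} (hσc : Continuous σ) {d n : ℕ} :
    ∀ s : ℕ, ∀ h ∈ Hidden σ d n s, ∀ i : Fin n, Continuous (fun x => h x i) := by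
  intro s
  induction s with
  | zero =>
    rintro h ⟨w, b0, rfl⟩ i
    exact hσc.comp (by fun_prop)
  | succ s ih =>
    rintro h ⟨g, hg, A, β, rfl⟩ i
    have : ∀ j : Fin n, Continuous (fun x => g x j) := fun j => ih g hg j
    refine hσc.comp ?_
    refine Continuous.add ?_ continuous_const
    exact continuous_finset_sum _ (fun j _ => (continuous_const.mul (this j)))

end AuxPW

noncomputable section SpikeTrain

variable (A : ℕ → ℝ) (Lp : ℕ → ℕ)

def bas (k : ℕ) : ℝ := (1/2 : ℝ) ^ (k + 1)

def stp (Lp : ℕ → ℕ) (k : ℕ) : ℝ := bas k / (Lp k + 2)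

def endp (Lp : ℕ → ℕ) (k : ℕ) : ℝ := bas k + (Lp k + 1) * stp Lp k

def clamp01 (v : ℝ) : ℝ := max 0 (min 1 v)

def wnd (Lp : ℕ → ℕ) (k : ℕ) (u : ℝ) : ℝ :=
  min (clamp01 ((u - bas k) / stp Lp k)) (clamp01 ((endp Lp k - u) / stp Lp k))

def fk (A : ℕ → ℝ) (Lp : ℕ → ℕ) (k : ℕ) (u : ℝ) : ℝ :=
  A k * Real.cos (Real.pi * ((u - bas k) / stp Lp k)) * wnd Lp k u

def ftrain (A : ℕ → ℝ) (Lp : ℕ → ℕ) (u : ℝ) : ℝ := ∑' k, fk A Lp k u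

lemma bas_pos (k : ℕ) : 0 < bas k := by unfold bas; positivity

lemma stp_pos (k : ℕ) : 0 < stp Lp k := by
  unfold stp bas
  have h1 : (0:ℝ) ≤ (Lp k : ℝ) := Nat.cast_nonneg _
  positivity

lemma endp_lt (k : ℕ) : endp Lp k < 2 * bas k := by
  unfold endp stp
  have hb := bas_pos k
  have h2 : (0:ℝ) < (Lp k : ℝ) + 2 := by positivity
  rw [div_eq_mul_inv, ← mul_assoc]
  have h3 : ((Lp k : ℝ) + 1) * bas k * ((Lp k : ℝ) + 2)⁻¹ < bas k := by
    rw [mul_inv_lt_iff₀ h2]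
    nlinarith
  linarith

lemma clamp01_mem (v : ℝ) : 0 ≤ clamp01 v ∧ clamp01 v ≤ 1 := by
  unfold clamp01
  constructor
  · exact le_max_left _ _
  · exact max_le (by norm_num) (min_le_left _ _)

lemma clamp01_eq_one {v : ℝ} (hv : 1 ≤ v) : clamp01 v = 1 := by
  unfold clamp01
  rw [min_eq_left hv]
  exact max_eq_right (by norm_num)

lemma wnd_mem (k : ℕ) (u : ℝ) : 0 ≤ wnd Lp k u ∧ wnd Lp k u ≤ 1 := by
  unfold wnd
  constructor
  · exact le_min (clamp01_mem _).1 (clamp01_mem _).1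
  · exact (min_le_left _ _).trans (clamp01_mem _).2

lemma fk_abs_le (k : ℕ) (u : ℝ) : |fk A Lp k u| ≤ |A k| := by
  unfold fk
  rw [abs_mul, abs_mul]
  have h1 : |Real.cos (Real.pi * ((u - bas k) / stp Lp k))| ≤ 1 := Real.abs_cos_le_one _
  have h2 : |wnd Lp k u| ≤ 1 := by
    rw [abs_of_nonneg (wnd_mem Lp k u).1]; exact (wnd_mem Lp k u).2
  calc |A k| * |Real.cos (Real.pi * ((u - bas k) / stp Lp k))| * |wnd Lp k u|
      ≤ |A k| * 1 * 1 := by gcongr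
  _ = |A k| := by ring

lemma fk_support {k : ℕ} {u : ℝ} (h : fk A Lp k u ≠ 0) :
    u ∈ Set.Ioo (bas k) (2 * bas k) := by
  have hw : wnd Lp k u ≠ 0 := fun h0 => h (by unfold fk; rw [h0]; ring)
  have hsp := stp_pos Lp k
  constructor
  · by_contra hub
    push_neg at hub
    apply hw
    unfold wnd clamp01
    have : (u - bas k) / stp Lp k ≤ 0 := div_nonpos_of_nonpos_of_nonneg (by linarith) hsp.le
    have h1 : min 1 ((u - bas k) / stp Lp k) ≤ 0 := (min_le_right _ _).trans this
    have h2 : max 0 (min 1 ((u - bas k) / stp Lp k)) = 0 := max_eq_left h1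
    rw [h2]
    exact min_eq_left (clamp01_mem _).1
  · have hend := endp_lt Lp k
    by_contra hub
    push_neg at hub
    apply hw
    unfold wnd clamp01
    have hue : endp Lp k ≤ u := by linarith
    have : (endp Lp k - u) / stp Lp k ≤ 0 := div_nonpos_of_nonpos_of_nonneg (by linarith) hsp.le
    have h1 : min 1 ((endp Lp k - u) / stp Lp k) ≤ 0 := (min_le_right _ _).trans this
    have h2 : max 0 (min 1 ((endp Lp k - u) / stp Lp k)) = 0 := max_eq_left h1
    rw [h2]
    exact min_eq_right (clamp01_mem _).1

lemma bas_disjoint {k k' : ℕ} (h : k ≠ k') {u : ℝ}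
    (h1 : u ∈ Set.Ioo (bas k) (2 * bas k)) (h2 : u ∈ Set.Ioo (bas k') (2 * bas k')) : False := by
  wlog hlt : k < k' generalizing k k'
  · exact this h.symm h2 h1 (by omega)
  have : 2 * bas k' ≤ bas k := by
    unfold bas
    have : (1/2:ℝ)^(k') ≤ (1/2)^(k+1) := by
      exact pow_le_pow_of_le_one (by norm_num) (by norm_num) (by omega)
    calc 2 * (1/2:ℝ)^(k'+1) = (1/2)^(k') := by ring
      _ ≤ (1/2)^(k+1) := this
  have := h1.1
  have := h2.2
  linarith

lemma fk_unique {k k' : ℕ} {u : ℝ} (h : fk A Lp k u ≠ 0) (h' : fk A Lp k' u ≠ 0) : k = k' := by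
  by_contra hne
  exact bas_disjoint hne (fk_support A Lp h) (fk_support A Lp h')

lemma ftrain_eq (k : ℕ) (u : ℝ) (hu : u ∈ Set.Ioo (bas k) (2 * bas k)) :
    ftrain A Lp u = fk A Lp k u := by
  unfold ftrain
  apply tsum_eq_single
  intro k' hk'
  by_contra h
  exact bas_disjoint hk' (fk_support A Lp h) hu

lemma fk_cont (k : ℕ) : Continuous (fk A Lp k) := by
  unfold fk wnd clamp01 endp
  fun_prop

lemma ftrain_cont (hA : Filter.Tendsto A Filter.atTop (nhds 0)) :
    Continuous (ftrain A Lp) := by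
  have huniform : TendstoUniformly (fun K u => ∑ k ∈ Finset.range K, fk A Lp k u)
      (ftrain A Lp) Filter.atTop := by
    rw [Metric.tendstoUniformly_iff]
    intro ε hε
    have := (Metric.tendsto_atTop.1 hA) ε hε
    obtain ⟨N, hN⟩ := this
    rw [Filter.eventually_atTop]
    refine ⟨N, fun K hK u => ?_⟩
    by_cases hex : ∃ k0, fk A Lp k0 u ≠ 0
    · obtain ⟨k0, hk0⟩ := hex
      have huniq : ∀ k ≠ k0, fk A Lp k u = 0 := by
        intro k hk
        by_contra h
        exact hk (fk_unique A Lp h hk0)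
      have hf : ftrain A Lp u = fk A Lp k0 u := tsum_eq_single k0 huniq
      by_cases hlt : k0 < K
      · have hS : ∑ k ∈ Finset.range K, fk A Lp k u = fk A Lp k0 u :=
          Finset.sum_eq_single_of_mem k0 (Finset.mem_range.2 hlt) (fun k _ hk => huniq k hk)
        rw [hf, hS]
        simpa using hε
      · have hS : ∑ k ∈ Finset.range K, fk A Lp k u = 0 :=
          Finset.sum_eq_zero (fun k hk => huniq k (by
            have := Finset.mem_range.1 hk; omega))
        rw [hf, hS]
        rw [Real.dist_eq, sub_zero]
        have h1 : |fk A Lp k0 u| ≤ |A k0| := fk_abs_le A Lp k0 u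
        have h2 := hN k0 (by omega)
        rw [Real.dist_eq, sub_zero] at h2
        exact lt_of_le_of_lt h1 h2
    · push_neg at hex
      have hf : ftrain A Lp u = 0 := by
        unfold ftrain
        rw [tsum_eq_single 0 (fun k _ => hex k)]
        exact hex 0
      have hS : ∑ k ∈ Finset.range K, fk A Lp k u = 0 := Finset.sum_eq_zero (fun k _ => hex k)
      rw [hf, hS]
      simpa using hε
  apply huniform.continuous
  exact (Filter.Eventually.of_forall (fun K => continuous_finset_sum _ (fun k _ => fk_cont A Lp k))).frequently

lemma cos_pi_nat (j : ℕ) : Real.cos (Real.pi * j) = (-1)^j := by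
  rw [mul_comm]
  simpa using Real.cos_add_nat_mul_pi 0 j

lemma ftrain_grid (k : ℕ) (j : ℕ) (h1 : 1 ≤ j) (h2 : j ≤ Lp k) :
    ftrain A Lp (bas k + j * stp Lp k) = A k * (-1)^j := by
  have hsp := stp_pos Lp k
  have hb := bas_pos k
  set u := bas k + j * stp Lp k with hu
  have harg : (u - bas k) / stp Lp k = j := by
    rw [hu]; field_simp; ring
  have hwnd : wnd Lp k u = 1 := by
    unfold wnd
    rw [harg]
    have hr : (endp Lp k - u) / stp Lp k = (Lp k : ℝ) + 1 - j := by
      unfold endp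
      rw [hu]; field_simp; ring
    rw [hr, clamp01_eq_one (by exact_mod_cast h1), clamp01_eq_one (by
      have : (j:ℝ) ≤ (Lp k : ℝ) := by exact_mod_cast h2
      linarith)]
    simp
  have hfk : fk A Lp k u = A k * (-1)^j := by
    unfold fk
    rw [harg, hwnd, cos_pi_nat]
    ring
  have humem : u ∈ Set.Ioo (bas k) (2 * bas k) := by
    constructor
    · rw [hu]
      have : (0:ℝ) < (j:ℝ) * stp Lp k := by
        have : (0:ℝ) < (j:ℝ) := by exact_mod_cast h1
        positivity
      linarith
    · have hend := endp_lt Lp k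
      have : u ≤ endp Lp k := by
        rw [hu]
        unfold endp
        have : (j : ℝ) ≤ (Lp k : ℝ) + 1 := by
          have : (j:ℝ) ≤ (Lp k : ℝ) := by exact_mod_cast h2
          linarith
        nlinarith [hsp]
      linarith
  rw [ftrain_eq A Lp k _ humem, hfk]

end SpikeTrain


set_option maxHeartbeats 2000000 in
/-- Let `d ≥ 1` and let `K ⊂ ℝ^d` be a compact set (not necessarily convex)
containing a nondegenerate segment `{b + t a : t ∈ [0,1]}` with `a ≠ 0`. Let `σ` be continuous
and piecewise polynomial with finitely many pieces. Then for arbitrary sequences `(r_k)`,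
`(n_k)` of naturals and any null sequence `(ε_k)` there is a continuous `f : K → ℝ` with
`inf_{g ∈ τ_{r_k,n_k}^{σ,d}} sup_{x ∈ K} |f x - g x| ≥ ε_k` for all `k ≥ 1`. -/
theorem deep_negative_uniform_spline_segment (d : ℕ) (hd : 1 ≤ d) (K : Set (Fin d → ℝ))
    (hK : IsCompact K) (a b : Fin d → ℝ) (ha : a ≠ 0)
    (hseg : ∀ t ∈ Set.Icc (0 : ℝ) 1, (fun j => b j + t * a j) ∈ K)
    (σ : ℝ → ℝ) (hσc : Continuous σ) (hσ : IsPiecewisePoly σ)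
    (r n : ℕ → ℕ) (hr : ∀ k, 1 ≤ r k) (hn : ∀ k, 1 ≤ n k)
    (ε : ℕ → ℝ) (hε : Filter.Tendsto ε Filter.atTop (nhds 0)) :
    ∃ f : (Fin d → ℝ) → ℝ, ContinuousOn f K ∧
      ∀ k : ℕ, 1 ≤ k → ∀ g ∈ Tau σ (r k) (n k) d,
        ε k ≤ sSup ((fun x => |f x - g x|) '' K) := by
  classical
  obtain ⟨m, t, ht, p, hp⟩ := hσ
  -- degree bound for σ's pieces
  set e : ℕ := max (Finset.univ.sup (fun j => (p j).natDegree)) 1 with hedef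
  have he : ∀ j, (p j).natDegree ≤ e := by
    intro j
    rw [hedef]
    exact le_trans (Finset.le_sup (f := fun j => (p j).natDegree) (Finset.mem_univ j)) le_sup_left
  have he1 : 1 ≤ e := by rw [hedef]; exact le_sup_right
  -- per-stage parameters
  set Dk : ℕ → ℕ := fun k => e ^ (r k) with hDk
  set Mk : ℕ → ℕ := fun k => n k * Cb m e (n k) (r k - 1) with hMk
  set Lp : ℕ → ℕ := fun k => (Mk k + 1) * (Dk k + 2) with hLp
  set A : ℕ → ℝ := fun k => |ε k| + (1/2 : ℝ) ^ (k + 1) with hA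
  have hA0 : Filter.Tendsto A Filter.atTop (nhds 0) := by
    have h1 : Filter.Tendsto (fun k => |ε k|) Filter.atTop (nhds 0) := by
      simpa using hε.abs
    have h2 : Filter.Tendsto (fun k : ℕ => (1/2 : ℝ) ^ (k + 1)) Filter.atTop (nhds 0) := by
      have := tendsto_pow_atTop_nhds_zero_of_lt_one (by norm_num : (0:ℝ) ≤ 1/2) (by norm_num)
      have := this.comp (Filter.tendsto_add_atTop_nat 1)
      simpa [Function.comp_def] using this
    have h3 := h1.add h2
    rw [add_zero] at h3
    simp only [hA]
    exact h3
  -- the line and the projection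
  set L : ℝ → (Fin d → ℝ) := fun u => fun j => b j + u * a j with hL
  set S2 : ℝ := ∑ j, a j ^ 2 with hS2def
  have hS2 : 0 < S2 := by
    obtain ⟨j, hj⟩ := Function.ne_iff.1 ha
    refine Finset.sum_pos' (fun i _ => sq_nonneg _) ⟨j, Finset.mem_univ _, ?_⟩
    exact lt_of_le_of_ne (sq_nonneg _) (Ne.symm (pow_ne_zero 2 hj))
  set π : (Fin d → ℝ) → ℝ := fun x => (∑ j, a j * (x j - b j)) / S2 with hπ
  have hproj : ∀ u : ℝ, π (L u) = u := by
    intro u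
    have : (∑ j, a j * (L u j - b j)) = u * S2 := by
      rw [hS2def, Finset.mul_sum]
      refine Finset.sum_congr rfl (fun j _ => ?_)
      simp only [hL]
      ring
    rw [hπ]
    simp only [this]
    field_simp
  set f : (Fin d → ℝ) → ℝ := fun x => ftrain A Lp (π x) with hf
  have hfc : Continuous f := (ftrain_cont A Lp hA0).comp (by
    rw [hπ]
    refine Continuous.div_const ?_ _
    exact continuous_finset_sum _ (fun j _ => continuous_const.mul ((continuous_apply j).sub continuous_const)))
  refine ⟨f, hfc.continuousOn, ?_⟩
  intro k hk g hg
  obtain ⟨s, hsr, h, hh, c, rfl⟩ := hg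
  -- PW structure of g along the line
  have hgl : ∃ B : Finset ℝ, B.card ≤ Mk k ∧ PW (Dk k) B (fun u => ∑ i, c i * h (L u) i) := by
    choose Bf hBcard hBpw using fun i => hidden_pw ht hp he a b s h hh i
    refine ⟨Finset.univ.biUnion Bf, ?_, ?_⟩
    · refine Finset.card_biUnion_le.trans ?_
      calc ∑ i : Fin (n k), (Bf i).card ≤ ∑ _i : Fin (n k), Cb m e (n k) s :=
            Finset.sum_le_sum (fun i _ => hBcard i)
        _ = n k * Cb m e (n k) s := by simp [Finset.sum_const, Finset.card_univ]
        _ ≤ Mk k := by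
            rw [hMk]
            exact Nat.mul_le_mul_left _ (Cb_mono m e (n k) (hn k) (by omega))
    · have := PW.sum Finset.univ Bf (fun i u => c i * h (L u) i)
        (fun i _ => PW.smul (c i) (hBpw i))
      refine PW.mono this (le_refl _) ?_
      rw [hDk]
      exact Nat.pow_le_pow_right he1 (by omega)
  obtain ⟨B, hBcard, hBpw⟩ := hgl
  set g : (Fin d → ℝ) → ℝ := fun x => ∑ i, c i * h x i with hgdef
  by_contra hcon
  push_neg at hcon
  -- boundedness & membership facts
  have hgc : Continuous g := by
    rw [hgdef]
    exact continuous_finset_sum _ (fun i _ => continuous_const.mul (hidden_cont hσc s h hh i))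
  have hΦ : ContinuousOn (fun x => |f x - g x|) K :=
    ((hfc.sub hgc).abs).continuousOn
  have hbdd : BddAbove ((fun x => |f x - g x|) '' K) := hK.bddAbove_image hΦ
  have hmem : ∀ x ∈ K, |f x - g x| ≤ sSup ((fun x => |f x - g x|) '' K) :=
    fun x hx => le_csSup hbdd (Set.mem_image_of_mem _ hx)
  have hεpos : 0 < ε k := by
    have h0 : L 0 ∈ K := by
      have := hseg 0 ⟨le_refl _, by norm_num⟩
      simpa [hL] using this
    have := hmem (L 0) h0
    have habs : (0:ℝ) ≤ |f (L 0) - g (L 0)| := abs_nonneg _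
    linarith
  have hAgt : ε k < A k := by
    simp only [hA]
    have : ε k ≤ |ε k| := le_abs_self _
    have hp2 : (0:ℝ) < (1/2:ℝ)^(k+1) := by positivity
    linarith
  -- pigeonhole: find a window free of breakpoints
  set D' : ℕ := Dk k with hD'
  set W : ℕ := Mk k + 1 with hW
  have hsp := stp_pos Lp k
  set st : ℝ := stp Lp k with hst
  set wl : ℕ → ℝ := fun w => bas k + (w * (D' + 2) : ℕ) * st + st/2 with hwl
  set wr : ℕ → ℝ := fun w => bas k + ((w+1) * (D' + 2) : ℕ) * st + st/2 with hwr
  have hwlr : ∀ w, wl w < wr w := by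
    intro w
    simp only [hwl, hwr]
    have : ((w * (D' + 2) : ℕ) : ℝ) < (((w+1) * (D' + 2) : ℕ) : ℝ) := by
      have : w * (D' + 2) < (w+1) * (D' + 2) := by
        have : 0 < D' + 2 := by omega
        exact (Nat.mul_lt_mul_right this).2 (by omega)
      exact_mod_cast this
    nlinarith
  have hwin : ∃ w : Fin W, ∀ x ∈ Set.Ioo (wl w) (wr w), x ∉ B := by
    by_contra hno
    push_neg at hno
    choose β hβmem hβB using hno
    have hcard : B.card < (Finset.univ : Finset (Fin W)).card := by
      rw [Finset.card_univ, Fintype.card_fin]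
      omega
    obtain ⟨w, _, w', _, hne, heq⟩ :=
      Finset.exists_ne_map_eq_of_card_lt_of_maps_to hcard (fun w _ => hβB w)
    have key : ∀ w1 w2 : Fin W, (w1 : ℕ) < (w2 : ℕ) → β w1 ≠ β w2 := by
      intro w1 w2 hlt heq'
      have h1 : wr w1 ≤ wl w2 := by
        simp only [hwl, hwr]
        have hn1 : ((w1:ℕ)+1) * (D' + 2) ≤ (w2:ℕ) * (D' + 2) := Nat.mul_le_mul_right _ (by omega)
        have hn2 : ((((w1:ℕ)+1) * (D' + 2) : ℕ) : ℝ) ≤ (((w2:ℕ) * (D' + 2) : ℕ) : ℝ) := by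
          exact_mod_cast hn1
        nlinarith
      have h2 := hβmem w1
      have h3 := hβmem w2
      rw [heq'] at h2
      have hb2 := h2.2
      have hb3 := h3.1
      linarith
    rcases Ne.lt_or_gt (show (w:ℕ) ≠ (w':ℕ) from fun hc => hne (Fin.ext hc)) with hlt | hlt
    · exact key w w' hlt heq
    · exact key w' w hlt heq.symm
  obtain ⟨w, hwB⟩ := hwin
  obtain ⟨q, hqdeg, hqeval⟩ := hBpw (wl w) (wr w) (hwlr w) hwB
  -- grid points inside the window
  set pt : ℕ → ℝ := fun i => bas k + ((w : ℕ) * (D' + 2) + i + 1 : ℕ) * st with hpt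
  have hptwin : ∀ i : ℕ, i ≤ D' + 1 → pt i ∈ Set.Ioo (wl w) (wr w) := by
    intro i hi
    simp only [hpt, hwl, hwr]
    constructor
    · have : ((w : ℕ) * (D' + 2) : ℝ) + 1/2 < (((w : ℕ) * (D' + 2) + i + 1 : ℕ) : ℝ) := by
        push_cast
        linarith [Nat.cast_nonneg (α := ℝ) i]
      have hc : (((w : ℕ) * (D' + 2) : ℕ) : ℝ) = ((w : ℕ) * (D' + 2) : ℝ) := by push_cast; ring
      nlinarith
    · have : (((w : ℕ) * (D' + 2) + i + 1 : ℕ) : ℝ) < ((((w:ℕ)+1) * (D' + 2) : ℕ) : ℝ) + 1/2 := by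
        push_cast
        have : (i:ℝ) ≤ (D':ℝ) + 1 := by exact_mod_cast hi
        linarith
      nlinarith
  have hgrid : ∀ i : ℕ, i ≤ D' + 1 →
      1 ≤ (w : ℕ) * (D' + 2) + i + 1 ∧ (w : ℕ) * (D' + 2) + i + 1 ≤ Lp k := by
    intro i hi
    constructor
    · omega
    · simp only [hLp]
      have hwW : (w : ℕ) < W := w.2
      have : (w : ℕ) * (D' + 2) + i + 1 ≤ (w : ℕ) * (D' + 2) + (D' + 2) := by omega
      calc (w : ℕ) * (D' + 2) + i + 1 ≤ ((w:ℕ) + 1) * (D' + 2) := by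
            rw [add_mul, one_mul]; omega
        _ ≤ (Mk k + 1) * (Dk k + 2) := by
            have h1 : (w:ℕ) + 1 ≤ Mk k + 1 := by
              have h3 : (w:ℕ) < W := w.2
              simp only [hW] at h3
              omega
            have h2 : D' + 2 = Dk k + 2 := by simp only [hD']
            rw [h2]
            exact Nat.mul_le_mul_right _ h1
  -- membership of grid points in [0,1] and in K
  have hpt01 : ∀ i : ℕ, i ≤ D' + 1 → pt i ∈ Set.Icc (0:ℝ) 1 := by
    intro i hi
    have hb := bas_pos k
    have hj := hgrid i hi
    constructor
    · simp only [hpt]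
      have : (0:ℝ) ≤ (((w : ℕ) * (D' + 2) + i + 1 : ℕ) : ℝ) * st := by positivity
      linarith
    · simp only [hpt, hst]
      have hLpk : (((w : ℕ) * (D' + 2) + i + 1 : ℕ) : ℝ) ≤ (Lp k : ℝ) := by exact_mod_cast hj.2
      have hsv : stp Lp k = bas k / (Lp k + 2) := rfl
      have h2 : (((w : ℕ) * (D' + 2) + i + 1 : ℕ) : ℝ) * stp Lp k ≤ bas k := by
        rw [hsv]
        rw [div_eq_mul_inv, ← mul_assoc]
        have hpos : (0:ℝ) < (Lp k : ℝ) + 2 := by positivity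
        rw [mul_inv_le_iff₀ hpos]  -- maybe wrong name
        nlinarith [bas_pos k]
      have hb1 : 2 * bas k ≤ 1 := by
        unfold bas
        calc 2 * (1/2:ℝ)^(k+1) = (1/2)^k := by ring
          _ ≤ 1 := by
            apply pow_le_one₀ (by norm_num) (by norm_num)
      linarith [bas_pos k]
  have hptK : ∀ i : ℕ, i ≤ D' + 1 → L (pt i) ∈ K := by
    intro i hi
    have := hseg (pt i) (hpt01 i hi)
    simpa [hL] using this
  -- the values of f at grid points
  have hfval : ∀ i : ℕ, i ≤ D' + 1 →
      f (L (pt i)) = A k * (-1)^((w : ℕ) * (D' + 2) + i + 1) := by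
    intro i hi
    have hj := hgrid i hi
    have hval := ftrain_grid A Lp k ((w : ℕ) * (D' + 2) + i + 1) hj.1 hj.2
    have hpteq : pt i = bas k + (((w : ℕ) * (D' + 2) + i + 1 : ℕ) : ℝ) * stp Lp k := rfl
    calc f (L (pt i)) = ftrain A Lp (π (L (pt i))) := rfl
      _ = ftrain A Lp (pt i) := by rw [hproj]
      _ = A k * (-1)^((w : ℕ) * (D' + 2) + i + 1) := by rw [hpteq]; exact hval
  -- signs of q at grid points
  set sg : ℕ → ℝ := fun i => (-1:ℝ)^((w : ℕ) * (D' + 2) + i + 1) with hsg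
  have hqs : ∀ i : ℕ, i ≤ D' + 1 → sg i * q.eval (pt i) > A k - ε k := by
    intro i hi
    have h1 : |f (L (pt i)) - g (L (pt i))| < ε k :=
      lt_of_le_of_lt (hmem _ (hptK i hi)) hcon
    have h2 : g (L (pt i)) = q.eval (pt i) := hqeval (pt i) (hptwin i hi)
    rw [hfval i hi, h2] at h1
    have hs1 : sg i = 1 ∨ sg i = -1 := by
      rcases Nat.even_or_odd ((w : ℕ) * (D' + 2) + i + 1) with hpar | hpar
      · left; simp only [hsg]; exact hpar.neg_one_pow
      · right; simp only [hsg]; exact hpar.neg_one_pow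
    have habs := abs_lt.1 h1
    rcases hs1 with hs | hs <;> simp only [hsg] at hs <;> simp only [hsg, hs] <;> nlinarith
  -- alternation: q has D'+1 roots
  have hAε : (0:ℝ) < A k - ε k := by linarith
  have hptlt : ∀ i : ℕ, pt i < pt (i+1) := by
    intro i
    simp only [hpt]
    have : (((w : ℕ) * (D' + 2) + i + 1 : ℕ) : ℝ) < (((w : ℕ) * (D' + 2) + (i+1) + 1 : ℕ) : ℝ) := by
      exact_mod_cast (by omega : (w : ℕ) * (D' + 2) + i + 1 < (w : ℕ) * (D' + 2) + (i+1) + 1)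
    nlinarith
  have hsgalt : ∀ i : ℕ, sg (i+1) = - sg i := by
    intro i
    simp only [hsg]
    have : (w : ℕ) * (D' + 2) + (i+1) + 1 = ((w : ℕ) * (D' + 2) + i + 1) + 1 := by omega
    rw [this, pow_succ]
    ring
  have hroot : ∀ i : ℕ, i ≤ D' → ∃ ρ ∈ Set.Ioo (pt i) (pt (i+1)), q.eval ρ = 0 := by
    intro i hi
    have hqi := hqs i (by omega)
    have hqi1 := hqs (i+1) (by omega)
    rw [hsgalt i] at hqi1
    have hcont : ContinuousOn (fun x => q.eval x) (Set.Icc (pt i) (pt (i+1))) :=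
      (Polynomial.continuous q).continuousOn
    rcases (by rcases Nat.even_or_odd ((w : ℕ) * (D' + 2) + i + 1) with hpar | hpar
               · exact Or.inl (by simp only [hsg]; exact hpar.neg_one_pow)
               · exact Or.inr (by simp only [hsg]; exact hpar.neg_one_pow) :
        sg i = 1 ∨ sg i = -1) with hs | hs
    · -- q (pt i) > 0, q (pt (i+1)) < 0
      rw [hs] at hqi hqi1
      have h1 : q.eval (pt i) > 0 := by linarith
      have h2 : q.eval (pt (i+1)) < 0 := by linarith
      have := intermediate_value_Ioo' (le_of_lt (hptlt i)) hcont
      have hm : (0:ℝ) ∈ Set.Ioo (q.eval (pt (i+1))) (q.eval (pt i)) := ⟨h2, h1⟩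
      obtain ⟨ρ, hρ, hρ0⟩ := this hm
      exact ⟨ρ, hρ, hρ0⟩
    · rw [hs] at hqi hqi1
      have h1 : q.eval (pt i) < 0 := by nlinarith
      have h2 : q.eval (pt (i+1)) > 0 := by nlinarith
      have := intermediate_value_Ioo (le_of_lt (hptlt i)) hcont
      have hm : (0:ℝ) ∈ Set.Ioo (q.eval (pt i)) (q.eval (pt (i+1))) := ⟨h1, h2⟩
      obtain ⟨ρ, hρ, hρ0⟩ := this hm
      exact ⟨ρ, hρ, hρ0⟩
  choose ρ hρmem hρ0 using hroot
  set ρ' : ℕ → ℝ := fun i => if h : i ≤ D' then ρ i h else 0 with hρ'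
  have hρ'mem : ∀ i : ℕ, i ≤ D' → ρ' i ∈ Set.Ioo (pt i) (pt (i+1))  := by
    intro i h
    simp only [hρ', dif_pos h]
    exact hρmem i h
  have hρ'0 : ∀ i : ℕ, i ≤ D' → q.eval (ρ' i) = 0 := by
    intro i h
    simp only [hρ', dif_pos h]
    exact hρ0 i h
  have hq0 : q ≠ 0 := by
    intro h0
    have := hqs 0 (by omega)
    rw [h0] at this
    simp at this
    nlinarith
  have hptmono : StrictMono pt := by
    apply strictMono_nat_of_lt_succ hptlt
  set F : Finset ℝ := (Finset.range (D' + 1)).image ρ' with hF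
  have hFsub : F ⊆ q.roots.toFinset := by
    intro x hx
    rw [hF, Finset.mem_image] at hx
    obtain ⟨i, hi, rfl⟩ := hx
    rw [Finset.mem_range] at hi
    rw [Multiset.mem_toFinset, Polynomial.mem_roots hq0]
    exact hρ'0 i (by omega)
  have hFcard : F.card = D' + 1 := by
    rw [hF, Finset.card_image_of_injOn, Finset.card_range]
    intro i hi j hj hij
    rw [Finset.coe_range, Set.mem_Iio] at hi hj
    by_contra hne
    rcases Nat.lt_or_ge i j with hlt | hge
    · have h1 : ρ' i < pt (i+1) := (hρ'mem i (by omega)).2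
      have h2 : pt j < ρ' j := (hρ'mem j (by omega)).1
      have h3 : pt (i+1) ≤ pt j := hptmono.monotone (by omega)
      rw [hij] at h1
      linarith
    · have hlt : j < i := by omega
      have h1 : ρ' j < pt (j+1) := (hρ'mem j (by omega)).2
      have h2 : pt i < ρ' i := (hρ'mem i (by omega)).1
      have h3 : pt (j+1) ≤ pt i := hptmono.monotone (by omega)
      rw [hij] at h2
      linarith
  have hle := Finset.card_le_card hFsub
  have hroots : q.roots.toFinset.card ≤ D' := by
    refine (Multiset.toFinset_card_le _).trans ?_
    exact (Polynomial.card_roots' q).trans (by rw [hD'] at hqdeg ⊢; exact hqdeg)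
  omega
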